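/- Define on the open simplex Δⁿ the contravariant metric g^{ij}(x) = ∑_{α,β=1}^n x^i (δ^i_α − x^α)(δ_{αβ} − 1/n) x^j (δ^j_β − x^β). Then g is invariant under the left translations of the group (Δⁿ, ⋆): for all u, x ∈ Δⁿ, letting J denote the derivative at x of the map z ↦ u⋆z (a linear map ℝⁿ → ℝⁿ), one has g^{ij}(u⋆x) = ∑_{k,l=1}^n J^i_k J^j_l g^{kl}(x). -/

import Mathlib

open Finset

/-- The open simplex `Δⁿ`: vectors with strictly positive entries summing to `1`. -/
def IsOpenSimplex {n : ℕ} (x : Fin n → ℝ) : Prop :=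
  (∀ i, 0 < x i) ∧ ∑ i, x i = 1

/-- The operation `x ⋆ y = (x ∘ y) / Tr(x ∘ y)`. -/
noncomputable def simplexMul {n : ℕ} (x y : Fin n → ℝ) : Fin n → ℝ :=
  fun i => x i * y i / ∑ k, x k * y k

/-- The contravariant metric
`g^{ij}(x) = ∑_{α,β} x^i (δ^i_α − x^α)(δ_{αβ} − 1/n) x^j (δ^j_β − x^β)`. -/
noncomputable def metricG {n : ℕ} (x : Fin n → ℝ) : Fin n → Fin n → ℝ :=
  fun i j => ∑ α, ∑ β,
    (x i * ((if i = α then (1 : ℝ) else 0) - x α)) *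
      ((if α = β then (1 : ℝ) else 0) - 1 / n) *
      (x j * ((if j = β then (1 : ℝ) else 0) - x β))


lemma fderiv_simplexMul {n : ℕ} (u x : Fin n → ℝ)
    (hS : (∑ m, u m * x m) ≠ 0) (k i : Fin n) :
    fderiv ℝ (fun z : Fin n → ℝ => simplexMul u z) x (Pi.single k 1) i
      = (u i * (if k = i then (1:ℝ) else 0) * (∑ m, u m * x m)
          - u i * x i * u k) / (∑ m, u m * x m) ^ 2 := by
  set S : ℝ := ∑ m, u m * x m with hSdef
  set Dlin : (Fin n → ℝ) →L[ℝ] ℝ :=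
    ∑ m, u m • (ContinuousLinearMap.proj m : (Fin n → ℝ) →L[ℝ] ℝ) with hD
  have hDder : HasFDerivAt (fun z : Fin n → ℝ => ∑ m, u m * z m) Dlin x := by
    have := HasFDerivAt.fun_sum (fun m (_ : m ∈ Finset.univ) =>
      ((ContinuousLinearMap.proj m : (Fin n → ℝ) →L[ℝ] ℝ).hasFDerivAt.const_mul (u m)
        : HasFDerivAt (fun z : Fin n → ℝ => u m * z m) _ x))
    simpa [hD] using this
  have hInv : ∀ ι : Fin n, HasFDerivAt (fun z : Fin n → ℝ => u ι * z ι / ∑ m, u m * z m)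
      ((u ι * x ι) • ((ContinuousLinearMap.smulRight (1 : ℝ →L[ℝ] ℝ) (-(S ^ 2)⁻¹)).comp Dlin)
        + S⁻¹ • (u ι • (ContinuousLinearMap.proj ι : (Fin n → ℝ) →L[ℝ] ℝ))) x := by
    intro ι
    have hN : HasFDerivAt (fun z : Fin n → ℝ => u ι * z ι)
        (u ι • (ContinuousLinearMap.proj ι : (Fin n → ℝ) →L[ℝ] ℝ)) x :=
      (ContinuousLinearMap.proj ι : (Fin n → ℝ) →L[ℝ] ℝ).hasFDerivAt.const_mul (u ι)
    have hinv : HasFDerivAt (fun z : Fin n → ℝ => (∑ m, u m * z m)⁻¹)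
        ((ContinuousLinearMap.smulRight (1 : ℝ →L[ℝ] ℝ) (-(S ^ 2)⁻¹)).comp Dlin) x :=
      (hasFDerivAt_inv hS).comp x hDder
    have := hN.mul hinv
    simp only [div_eq_mul_inv]
    exact this
  have hmain : HasFDerivAt (fun z : Fin n → ℝ => simplexMul u z)
      (ContinuousLinearMap.pi fun ι =>
        (u ι * x ι) • ((ContinuousLinearMap.smulRight (1 : ℝ →L[ℝ] ℝ) (-(S ^ 2)⁻¹)).comp Dlin)
        + S⁻¹ • (u ι • (ContinuousLinearMap.proj ι : (Fin n → ℝ) →L[ℝ] ℝ))) x := by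
    apply hasFDerivAt_pi'.2
    intro ι
    exact hInv ι
  rw [hmain.fderiv]
  have hdv : Dlin (Pi.single k 1) = u k := by
    simp [hD, ContinuousLinearMap.sum_apply, Pi.single_apply, eq_comm]
  simp only [ContinuousLinearMap.pi_apply, ContinuousLinearMap.add_apply,
    ContinuousLinearMap.smul_apply, ContinuousLinearMap.comp_apply, hdv,
    ContinuousLinearMap.smulRight_apply, ContinuousLinearMap.one_apply,
    ContinuousLinearMap.proj_apply, Pi.single_apply, smul_eq_mul]
  have hS2 : S ^ 2 ≠ 0 := pow_ne_zero _ hS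
  rcases eq_or_ne k i with h | h
  · subst h; field_simp; ring
  · rw [if_neg h, if_neg (Ne.symm h)]; field_simp; ring

lemma metricG_eq {n : ℕ} (x : Fin n → ℝ) (hx : ∑ a, x a = 1) (i j : Fin n) :
    metricG x i j
      = x i * x j * ((if i = j then (1:ℝ) else 0) - x i - x j + ∑ a, x a ^ 2) := by
  have hB : (∑ β, x j * ((if j = β then (1:ℝ) else 0) - x β)) = 0 := by
    rw [← Finset.mul_sum, Finset.sum_sub_distrib]
    simp [hx]
  unfold metricG
  have step : ∀ α : Fin n,
      (∑ β, (x i * ((if i = α then (1:ℝ) else 0) - x α)) *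
        ((if α = β then (1:ℝ) else 0) - 1 / n) *
        (x j * ((if j = β then (1:ℝ) else 0) - x β)))
      = (x i * ((if i = α then (1:ℝ) else 0) - x α)) *
        (x j * ((if j = α then (1:ℝ) else 0) - x α)) := by
    intro α
    have : ∀ β : Fin n,
        (x i * ((if i = α then (1:ℝ) else 0) - x α)) *
        ((if α = β then (1:ℝ) else 0) - 1 / n) *
        (x j * ((if j = β then (1:ℝ) else 0) - x β))
        = (x i * ((if i = α then (1:ℝ) else 0) - x α)) *
            ((if α = β then (1:ℝ) else 0) * (x j * ((if j = β then (1:ℝ) else 0) - x β)))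
          - ((x i * ((if i = α then (1:ℝ) else 0) - x α)) * (1/n)) *
            (x j * ((if j = β then (1:ℝ) else 0) - x β)) := by
      intro β; ring
    rw [Finset.sum_congr rfl fun β _ => this β, Finset.sum_sub_distrib,
      ← Finset.mul_sum, ← Finset.mul_sum, hB, mul_zero, sub_zero]
    congr 1
    simp [ite_mul, Finset.sum_ite_eq]
  rw [Finset.sum_congr rfl fun α _ => step α]
  have expand : ∀ α : Fin n,
      (x i * ((if i = α then (1:ℝ) else 0) - x α)) *
        (x j * ((if j = α then (1:ℝ) else 0) - x α))
      = x i * x j * ((if i = α then (1:ℝ) else 0) * (if j = α then (1:ℝ) else 0))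
        - x i * x j * ((if i = α then (1:ℝ) else 0) * x α)
        - x i * x j * ((if j = α then (1:ℝ) else 0) * x α)
        + x i * x j * x α ^ 2 := by
    intro α; ring
  rw [Finset.sum_congr rfl fun α _ => expand α]
  rw [Finset.sum_add_distrib, Finset.sum_sub_distrib, Finset.sum_sub_distrib,
    ← Finset.mul_sum, ← Finset.mul_sum, ← Finset.mul_sum, ← Finset.mul_sum]
  have h1 : (∑ α, (if i = α then (1:ℝ) else 0) * (if j = α then (1:ℝ) else 0))
      = if i = j then (1:ℝ) else 0 := by
    simp only [ite_mul, one_mul, zero_mul, Finset.sum_ite_eq, Finset.mem_univ, if_true]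
    by_cases h : i = j
    · simp [h]
    · simp [h, Ne.symm h]
  have h2 : (∑ α, (if i = α then (1:ℝ) else 0) * x α) = x i := by
    simp [ite_mul, Finset.sum_ite_eq]
  have h3 : (∑ α, (if j = α then (1:ℝ) else 0) * x α) = x j := by
    simp [ite_mul, Finset.sum_ite_eq]
  rw [h1, h2, h3]; ring

lemma main_alg {n : ℕ} (x y : Fin n → ℝ) (hy1 : ∑ a, y a = 1) (i j : Fin n) :
    (∑ k, ∑ l,
      (y i * ((if i = k then (1:ℝ) else 0) - y k)) *
      (y j * ((if j = l then (1:ℝ) else 0) - y l)) *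
      ((if k = l then (1:ℝ) else 0) - x k - x l + ∑ a, x a ^ 2))
    = y i * y j * ((if i = j then (1:ℝ) else 0) - y i - y j + ∑ a, y a ^ 2) := by
  set C : Fin n → ℝ := fun k => y i * ((if i = k then (1:ℝ) else 0) - y k) with hC
  set D : Fin n → ℝ := fun l => y j * ((if j = l then (1:ℝ) else 0) - y l) with hD
  have hCsum : ∑ k, C k = 0 := by
    rw [hC, ← Finset.mul_sum, Finset.sum_sub_distrib]
    simp [hy1]
  have hDsum : ∑ l, D l = 0 := by
    rw [hD, ← Finset.mul_sum, Finset.sum_sub_distrib]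
    simp [hy1]
  set Q : ℝ := ∑ a, x a ^ 2 with hQ
  set T : ℝ := ∑ l, D l * x l with hT
  have step1 : ∀ k, (∑ l, C k * D l * ((if k = l then (1:ℝ) else 0) - x k - x l + Q))
      = C k * D k - C k * T := by
    intro k
    have : ∀ l, C k * D l * ((if k = l then (1:ℝ) else 0) - x k - x l + Q)
        = C k * (if k = l then D l else 0)
          - (C k * x k) * D l - C k * (D l * x l) + (C k * Q) * D l := by
      intro l; by_cases h : k = l <;> simp [h] <;> ring
    rw [Finset.sum_congr rfl fun l _ => this l]
    have e1 : ∑ l, C k * (if k = l then D l else 0) = C k * D k := by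
      rw [← Finset.mul_sum, Finset.sum_ite_eq]; simp
    have e2 : ∑ l, (C k * x k) * D l = 0 := by
      rw [← Finset.mul_sum, hDsum, mul_zero]
    have e3 : ∑ l, C k * (D l * x l) = C k * T := by
      rw [← Finset.mul_sum, ← hT]
    have e4 : ∑ l, (C k * Q) * D l = 0 := by
      rw [← Finset.mul_sum, hDsum, mul_zero]
    rw [Finset.sum_add_distrib, Finset.sum_sub_distrib, Finset.sum_sub_distrib, e1, e2, e3, e4]
    ring
  rw [Finset.sum_congr rfl fun k _ => step1 k, Finset.sum_sub_distrib, ← Finset.sum_mul,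
    hCsum, zero_mul, sub_zero]
  have expand : ∀ k, C k * D k
      = y i * y j * ((if i = k then (1:ℝ) else 0) * (if j = k then (1:ℝ) else 0))
        - y i * y j * ((if i = k then (1:ℝ) else 0) * y k)
        - y i * y j * ((if j = k then (1:ℝ) else 0) * y k)
        + y i * y j * y k ^ 2 := by
    intro k; rw [hC, hD]; ring
  rw [Finset.sum_congr rfl fun k _ => expand k]
  rw [Finset.sum_add_distrib, Finset.sum_sub_distrib, Finset.sum_sub_distrib,
    ← Finset.mul_sum, ← Finset.mul_sum, ← Finset.mul_sum, ← Finset.mul_sum]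
  have h1 : (∑ k, (if i = k then (1:ℝ) else 0) * (if j = k then (1:ℝ) else 0))
      = if i = j then (1:ℝ) else 0 := by
    simp only [ite_mul, one_mul, zero_mul, Finset.sum_ite_eq, Finset.mem_univ, if_true]
    by_cases h : i = j
    · simp [h]
    · simp [h, Ne.symm h]
  have h2 : (∑ k, (if i = k then (1:ℝ) else 0) * y k) = y i := by
    simp [ite_mul, Finset.sum_ite_eq]
  have h3 : (∑ k, (if j = k then (1:ℝ) else 0) * y k) = y j := by
    simp [ite_mul, Finset.sum_ite_eq]
  rw [h1, h2, h3]; ring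

/-- The metric `g` is invariant under the left translations of the group `(Δⁿ, ⋆)`:
for `u, x ∈ Δⁿ`, letting `J` be the derivative at `x` of `z ↦ u ⋆ z`, one has
`g^{ij}(u ⋆ x) = ∑_{k,l} J^i_k J^j_l g^{kl}(x)`. -/
theorem metricLeftInvariant {n : ℕ} (hn : 1 ≤ n)
    (u x : Fin n → ℝ) (hu : IsOpenSimplex u) (hx : IsOpenSimplex x) :
    ∀ i j : Fin n,
      metricG (simplexMul u x) i j
        = ∑ k, ∑ l,
            (fderiv ℝ (fun z : Fin n → ℝ => simplexMul u z) x (Pi.single k 1) i) *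
            (fderiv ℝ (fun z : Fin n → ℝ => simplexMul u z) x (Pi.single l 1) j) *
            metricG x k l := by
  intro i j
  obtain ⟨hup, hus⟩ := hu
  obtain ⟨hxp, hxs⟩ := hx
  haveI : Nonempty (Fin n) := ⟨⟨0, hn⟩⟩
  have hS : 0 < ∑ m, u m * x m :=
    Finset.sum_pos (fun m _ => mul_pos (hup m) (hxp m)) Finset.univ_nonempty
  have hS0 : (∑ m, u m * x m) ≠ 0 := ne_of_gt hS
  set y : Fin n → ℝ := simplexMul u x with hy
  have hyk : ∀ k, y k = u k * x k / ∑ m, u m * x m := fun k => rfl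
  have hy1 : ∑ a, y a = 1 := by
    simp only [hyk]
    rw [← Finset.sum_div, div_self hS0]
  have glue : ∀ (a k : Fin n),
      ((u a * (if k = a then (1:ℝ) else 0) * (∑ m, u m * x m)
          - u a * x a * u k) / (∑ m, u m * x m) ^ 2) * x k
        = y a * ((if a = k then (1:ℝ) else 0) - y k) := by
    intro a k
    rcases eq_or_ne k a with h | h
    · subst h
      rw [if_pos rfl]
      simp only [hyk]
      field_simp
    · rw [if_neg h, if_neg (Ne.symm h)]
      simp only [hyk]
      field_simp
      ring
  have hpt : ∀ k l,
      (fderiv ℝ (fun z : Fin n → ℝ => simplexMul u z) x (Pi.single k 1) i) *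
      (fderiv ℝ (fun z : Fin n → ℝ => simplexMul u z) x (Pi.single l 1) j) *
      metricG x k l
      = (y i * ((if i = k then (1:ℝ) else 0) - y k)) *
        (y j * ((if j = l then (1:ℝ) else 0) - y l)) *
        ((if k = l then (1:ℝ) else 0) - x k - x l + ∑ a, x a ^ 2) := by
    intro k l
    rw [fderiv_simplexMul u x hS0 k i, fderiv_simplexMul u x hS0 l j,
      metricG_eq x hxs k l]
    calc ((u i * (if k = i then (1:ℝ) else 0) * (∑ m, u m * x m)
            - u i * x i * u k) / (∑ m, u m * x m) ^ 2) *
         ((u j * (if l = j then (1:ℝ) else 0) * (∑ m, u m * x m)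
            - u j * x j * u l) / (∑ m, u m * x m) ^ 2) *
         (x k * x l * ((if k = l then (1:ℝ) else 0) - x k - x l + ∑ a, x a ^ 2))
        = (((u i * (if k = i then (1:ℝ) else 0) * (∑ m, u m * x m)
            - u i * x i * u k) / (∑ m, u m * x m) ^ 2) * x k) *
          (((u j * (if l = j then (1:ℝ) else 0) * (∑ m, u m * x m)
            - u j * x j * u l) / (∑ m, u m * x m) ^ 2) * x l) *
          ((if k = l then (1:ℝ) else 0) - x k - x l + ∑ a, x a ^ 2) := by ring
      _ = _ := by rw [glue i k, glue j l]
  rw [metricG_eq y hy1 i j,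
    Finset.sum_congr rfl fun k _ => Finset.sum_congr rfl fun l _ => hpt k l]
  exact (main_alg x y hy1 i j).symm
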